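/- Let f : M → G/H be smooth with local lift F : U → G on a simply connected open set U, and write φ = F⁻¹dF = φ_𝔥 + φ_𝔪 according to the eigenspace decomposition 𝔤 = 𝔥 ⊕ 𝔪 of dσ. Then the pullback under the Cartan map ι satisfies (ι∘f)⁻¹ d(ι∘f) = −2 Ad_F(φ_𝔪). -/

import Mathlib

/-- For a symmetric space with involution `σ` and Cartan map `ι(gH) = σ(g)g⁻¹`, a lift
`F` of `f` with `φ = F⁻¹dF = φ_𝔥 + φ_𝔪` (eigenspace decomposition of `dσ`) satisfies
`(ι∘f)⁻¹ d(ι∘f) = −2 Ad_F(φ_𝔪)`.  Here the group is realised as the units of a complete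
normed algebra `A`, so `ι∘f = σ(F)F⁻¹`, `Ad_F(ξ) = FξF⁻¹`, and `φ_𝔪 = (1/2)(φ − σφ)`. -/
theorem stmt10 {E A : Type*} [NormedAddCommGroup E] [NormedSpace ℝ E]
    [NormedRing A] [NormedAlgebra ℝ A] [CompleteSpace A]
    (σ : A ≃ₐ[ℝ] A) (hσinv : ∀ a, σ (σ a) = a) (hσcont : Continuous σ)
    (F : E → A) (hF : Differentiable ℝ F) (hFu : ∀ x, IsUnit (F x))
    (φ φh φm : E → E → A)
    (hφ : ∀ x v, φ x v = Ring.inverse (F x) * fderiv ℝ F x v)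
    (hφh : ∀ x v, φh x v = (2 : ℝ)⁻¹ • (φ x v + σ (φ x v)))
    (hφm : ∀ x v, φm x v = (2 : ℝ)⁻¹ • (φ x v - σ (φ x v)))
    (x : E) (v : E) :
    Ring.inverse (σ (F x) * Ring.inverse (F x)) *
        fderiv ℝ (fun y => σ (F y) * Ring.inverse (F y)) x v
      = (-2 : ℝ) • (F x * φm x v * Ring.inverse (F x)) := by
  classical
  set F' := fderiv ℝ F x with hF'def
  have hFd : HasFDerivAt F F' x := (hF x).hasFDerivAt
  let L : A →L[ℝ] A := { toLinearMap := σ.toLinearMap, cont := hσcont }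
  set u : Aˣ := (hFu x).unit with hu
  have hux : (u : A) = F x := (hFu x).unit_spec
  have hsU : IsUnit (σ (F x)) := (hFu x).map σ
  set su : Aˣ := hsU.unit with hsudef
  have hsu : (su : A) = σ (F x) := hsU.unit_spec
  have hsuinv : ((su⁻¹ : Aˣ) : A) = σ ((u⁻¹ : Aˣ) : A) := by
    apply Units.inv_eq_of_mul_eq_one_right
    rw [hsu, ← map_mul, ← hux, Units.mul_inv, map_one]
  have hinvFx : Ring.inverse (F x) = ((u⁻¹ : Aˣ) : A) := by
    rw [← hux, Ring.inverse_unit]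
  have hinv : HasFDerivAt (fun y => Ring.inverse (F y))
      ((-(ContinuousLinearMap.mulLeftRight ℝ A ((u⁻¹ : Aˣ) : A) ((u⁻¹ : Aˣ) : A))).comp F') x := by
    have h := hasFDerivAt_ringInverse (𝕜 := ℝ) u
    rw [hux] at h
    exact h.comp x hFd
  have hσF : HasFDerivAt (fun y => σ (F y)) (L.comp F') x :=
    L.hasFDerivAt.comp x hFd
  have hmul := hσF.mul' hinv
  have hfd : fderiv ℝ (fun y => σ (F y) * Ring.inverse (F y)) x = _ := hmul.fderiv
  rw [hfd]
  have hLapp : ∀ a, L a = σ a := fun a => rfl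
  have hbig : Ring.inverse (σ (F x) * Ring.inverse (F x)) = ((u * su⁻¹ : Aˣ) : A) := by
    have : σ (F x) * Ring.inverse (F x) = ((su * u⁻¹ : Aˣ) : A) := by
      rw [hinvFx, ← hsu]; rfl
    rw [this, Ring.inverse_unit, mul_inv_rev, inv_inv]
  rw [hbig, hφm, hφ, hinvFx, ← hF'def]
  simp only [ContinuousLinearMap.add_apply, ContinuousLinearMap.smul_apply,
    ContinuousLinearMap.comp_apply, ContinuousLinearMap.neg_apply,
    ContinuousLinearMap.mulLeftRight_apply, ContinuousLinearMap.smulRight_apply,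
    ContinuousLinearMap.coe_smul', Pi.smul_apply]
  have hsu' : σ ((u : A)) = ((su : Aˣ) : A) := by rw [hsu, hux]
  rw [hLapp, map_mul σ, ← hsuinv, ← hux, hsu']
  rw [mul_smul_comm, smul_mul_assoc, smul_smul]
  norm_num
  push_cast [Units.val_mul]
  simp only [hsu', smul_eq_mul, smul_sub, mul_sub, sub_mul, mul_add, mul_neg, neg_mul,
    mul_assoc, Units.mul_inv_cancel_left, Units.inv_mul_cancel_left, neg_smul, one_smul,
    neg_sub]
  abel
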